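/- Let v, w ∈ S_d be non-overlapping patterns that are c-Wilf-equivalent in permutations (g_0^v(S_n) = g_0^w(S_n) for all n). Then they are strongly c-Wilf-equivalent in permutations: g_r^v(S_n) = g_r^w(S_n) for all n ∈ ℕ and all r ∈ ℕ₀. -/

import Mathlib

open Finset MeasureTheory Polynomial

attribute [local instance] Classical.propDecidable

/-- `w` (restricted to positions `i, i+1, ..., i+d-1`) is a consecutive occurrence of the
pattern `v` (whose entries are `v 0, ..., v (d-1)`), i.e. the window is order-isomorphic
(respecting equalities) to the pattern. -/
def consecOcc {α : Type*} [LinearOrder α] (d : ℕ) (v : ℕ → ℕ) (w : ℕ → α) (i : ℕ) : Prop :=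
  ∀ p q, p < d → q < d →
    ((w (i + p) < w (i + q) ↔ v p < v q) ∧ (w (i + p) = w (i + q) ↔ v p = v q))

/-- number of consecutive occurrences of the pattern `v` of length `d` in the word `w`
of length `n`. -/
noncomputable def conCount {α : Type*} [LinearOrder α] (d n : ℕ) (v : ℕ → ℕ) (w : ℕ → α) : ℕ :=
  ((Finset.range n).filter (fun i => i + d ≤ n ∧ consecOcc d v w i)).card

/-- the word (ℕ-valued, 0-indexed) associated with a permutation of `Fin n`. -/
def permWord {n : ℕ} (σ : Equiv.Perm (Fin n)) : ℕ → ℕ :=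
  fun j => if h : j < n then (σ ⟨j, h⟩ : ℕ) else 0

/-- `g_r^v(S_n)`: number of permutations of length `n` with exactly `r` consecutive
occurrences of the pattern `v` (of length `d`). -/
noncomputable def gPerm (d : ℕ) (v : ℕ → ℕ) (n r : ℕ) : ℕ :=
  Nat.card {σ : Equiv.Perm (Fin n) // conCount d n v (permWord σ) = r}

/-- the word (ℕ-valued, 0-indexed) associated with a `k`-ary word of length `n`. -/
def wordFn {k n : ℕ} (w : Fin n → Fin k) : ℕ → ℕ :=
  fun j => if h : j < n then (w ⟨j, h⟩ : ℕ) else 0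

/-- `g_r^v([k]^n)`: number of `k`-ary words of length `n` with exactly `r` consecutive
occurrences of the pattern `v` (of length `d`). -/
noncomputable def gWord (d k n r : ℕ) (v : ℕ → ℕ) : ℕ :=
  Nat.card {w : Fin n → Fin k // conCount d n v (wordFn w) = r}

/-- `i` is in the overlap set `O_v` of the pattern `v` of length `d`:
`1 ≤ i < d` and the first `i` entries have the same relative order as the last `i` entries. -/
def inOverlap (d : ℕ) (v : ℕ → ℕ) (i : ℕ) : Prop :=
  1 ≤ i ∧ i < d ∧ ∀ p q, p < i → q < i → (v p < v q ↔ v (d - i + p) < v (d - i + q))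

----------------------------------------------------------------
-- counting definitions
----------------------------------------------------------------

noncomputable def Mc (d : ℕ) (u : ℕ → ℕ) (n : ℕ) (S : Finset ℕ) : ℕ :=
  ((Finset.univ : Finset (Equiv.Perm (Fin n))).filter
    (fun σ => ∀ i ∈ S, consecOcc d u (permWord σ) i)).card

noncomputable def OccF (d : ℕ) (u : ℕ → ℕ) {n : ℕ} (σ : Equiv.Perm (Fin n)) : Finset ℕ :=
  (Finset.range n).filter (fun i => i + d ≤ n ∧ consecOcc d u (permWord σ) i)

noncomputable def Nc (d : ℕ) (u : ℕ → ℕ) (n : ℕ) (S : Finset ℕ) : ℕ :=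
  (Finset.univ.filter (fun σ : Equiv.Perm (Fin n) => OccF d u σ = S)).card

def validF (d n : ℕ) : Finset ℕ := (Finset.range n).filter (fun i => i + d ≤ n)

def chainF (d m : ℕ) : Finset ℕ := (Finset.range m).image (· * (d-1))

noncomputable def cl (d : ℕ) (u : ℕ → ℕ) (m : ℕ) : ℕ := Mc d u (m*(d-1)+1) (chainF d m)

----------------------------------------------------------------
-- occurrence transfer along order-embeddings
----------------------------------------------------------------

theorem occ_transfer (d : ℕ) (u : ℕ → ℕ) {N M : ℕ} (σ : Equiv.Perm (Fin N))
    (ρ : Equiv.Perm (Fin M)) {i t : ℕ} (hi : i + d ≤ N) (ht : t + d ≤ M)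
    (f : Fin M → Fin N) (hf : ∀ x y, f x < f y ↔ x < y)
    (hcomm : ∀ p, p < d → ∀ (h1 : i + p < N) (h2 : t + p < M),
      σ ⟨i + p, h1⟩ = f (ρ ⟨t + p, h2⟩)) :
    consecOcc d u (permWord σ) i ↔ consecOcc d u (permWord ρ) t := by
  have hinj : Function.Injective f := by
    intro x y hxy
    rcases lt_trichotomy x y with h | h | h
    · exact absurd ((hf x y).mpr h) (by simp [hxy])
    · exact h
    · exact absurd ((hf y x).mpr h) (by simp [hxy])
  have key : ∀ p q, p < d → q < d →
      (permWord σ (i + p) < permWord σ (i + q) ↔ permWord ρ (t + p) < permWord ρ (t + q)) ∧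
      (permWord σ (i + p) = permWord σ (i + q) ↔ permWord ρ (t + p) = permWord ρ (t + q)) := by
    intro p q hp hq
    have h1p : i + p < N := by omega
    have h1q : i + q < N := by omega
    have h2p : t + p < M := by omega
    have h2q : t + q < M := by omega
    have e1 : permWord σ (i + p) = ((f (ρ ⟨t + p, h2p⟩) : Fin N) : ℕ) := by
      simp [permWord, h1p, hcomm p hp h1p h2p]
    have e2 : permWord σ (i + q) = ((f (ρ ⟨t + q, h2q⟩) : Fin N) : ℕ) := by
      simp [permWord, h1q, hcomm q hq h1q h2q]
    have e3 : permWord ρ (t + p) = ((ρ ⟨t + p, h2p⟩ : Fin M) : ℕ) := by simp [permWord, h2p]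
    have e4 : permWord ρ (t + q) = ((ρ ⟨t + q, h2q⟩ : Fin M) : ℕ) := by simp [permWord, h2q]
    rw [e1, e2, e3, e4]
    constructor
    · rw [← Fin.lt_def, ← Fin.lt_def, hf]
    · rw [Fin.val_eq_val, Fin.val_eq_val]
      exact ⟨fun h => hinj h, fun h => congrArg f h⟩
  constructor
  · intro h p q hp hq
    exact ⟨(key p q hp hq).1.symm.trans (h p q hp hq).1,
           (key p q hp hq).2.symm.trans (h p q hp hq).2⟩
  · intro h p q hp hq
    exact ⟨(key p q hp hq).1.trans (h p q hp hq).1,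
           (key p q hp hq).2.trans (h p q hp hq).2⟩

----------------------------------------------------------------
-- the splitting bijection
----------------------------------------------------------------

section SplitBij

variable {n a L : ℕ}

def collapse (a L x : ℕ) : ℕ := if x < a then x else x - L

theorem collapse_lt {x : ℕ} (hL : a + L ≤ n) (hx : x < n) (h : ¬((a ≤ x) ∧ x < a + L)) :
    collapse a L x < n - L := by
  unfold collapse; split <;> omega

theorem card_compl_eq (A : Finset (Fin n)) (hA : A.card = L) : Aᶜ.card = n - L := by
  rw [Finset.card_compl, hA, Fintype.card_fin]

noncomputable def mkFun (hL : a + L ≤ n) (A : Finset (Fin n)) (hA : A.card = L)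
    (π : Equiv.Perm (Fin L)) (τ : Equiv.Perm (Fin (n - L))) (x : Fin n) : Fin n :=
  if h : a ≤ (x : ℕ) ∧ (x : ℕ) < a + L then
    (A.orderIsoOfFin hA (π ⟨(x : ℕ) - a, by omega⟩) : Fin n)
  else
    (Aᶜ.orderIsoOfFin (card_compl_eq A hA) (τ ⟨collapse a L x, collapse_lt hL x.isLt h⟩) : Fin n)

theorem mkFun_window (hL : a + L ≤ n) (A : Finset (Fin n)) (hA : A.card = L)
    (π : Equiv.Perm (Fin L)) (τ : Equiv.Perm (Fin (n - L))) (x : Fin n)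
    (h : a ≤ (x : ℕ) ∧ (x : ℕ) < a + L) :
    mkFun hL A hA π τ x = (A.orderIsoOfFin hA (π ⟨(x : ℕ) - a, by omega⟩) : Fin n) := by
  rw [mkFun, dif_pos h]

theorem mkFun_out (hL : a + L ≤ n) (A : Finset (Fin n)) (hA : A.card = L)
    (π : Equiv.Perm (Fin L)) (τ : Equiv.Perm (Fin (n - L))) (x : Fin n)
    (h : ¬((a ≤ (x : ℕ)) ∧ (x : ℕ) < a + L)) :
    mkFun hL A hA π τ x =
      (Aᶜ.orderIsoOfFin (card_compl_eq A hA) (τ ⟨collapse a L x, collapse_lt hL x.isLt h⟩) : Fin n) := by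
  rw [mkFun, dif_neg h]

theorem mkFun_inj (hL : a + L ≤ n) (A : Finset (Fin n)) (hA : A.card = L)
    (π : Equiv.Perm (Fin L)) (τ : Equiv.Perm (Fin (n - L))) :
    Function.Injective (mkFun hL A hA π τ) := by
  intro x y hxy
  by_cases hx : a ≤ (x : ℕ) ∧ (x : ℕ) < a + L <;> by_cases hy : a ≤ (y : ℕ) ∧ (y : ℕ) < a + L
  · rw [mkFun_window hL A hA π τ x hx, mkFun_window hL A hA π τ y hy] at hxy
    have h1 := Subtype.coe_injective hxy
    have h2 := π.injective ((A.orderIsoOfFin hA).injective h1)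
    have h3 : (x : ℕ) - a = (y : ℕ) - a := congrArg Fin.val h2
    exact Fin.ext (by omega)
  · rw [mkFun_window hL A hA π τ x hx, mkFun_out hL A hA π τ y hy] at hxy
    have m1 : mkFun hL A hA π τ x ∈ A := by
      rw [mkFun_window hL A hA π τ x hx]; exact (A.orderIsoOfFin hA _).2
    exfalso
    have m2 := (Aᶜ.orderIsoOfFin (card_compl_eq A hA)
      (τ ⟨collapse a L y, collapse_lt hL y.isLt hy⟩)).2
    rw [mkFun_window hL A hA π τ x hx] at m1
    rw [hxy] at m1
    exact (Finset.mem_compl.mp m2) m1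
  · rw [mkFun_out hL A hA π τ x hx, mkFun_window hL A hA π τ y hy] at hxy
    exfalso
    have m2 := (Aᶜ.orderIsoOfFin (card_compl_eq A hA)
      (τ ⟨collapse a L x, collapse_lt hL x.isLt hx⟩)).2
    have m1 := (A.orderIsoOfFin hA (π ⟨(y : ℕ) - a, by omega⟩)).2
    rw [← hxy] at m1
    exact (Finset.mem_compl.mp m2) m1
  · rw [mkFun_out hL A hA π τ x hx, mkFun_out hL A hA π τ y hy] at hxy
    have h1 := Subtype.coe_injective hxy
    have h2 := τ.injective ((Aᶜ.orderIsoOfFin (card_compl_eq A hA)).injective h1)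
    have h3 : collapse a L x = collapse a L y := congrArg Fin.val h2
    unfold collapse at h3
    have hxn := x.isLt
    have hyn := y.isLt
    apply Fin.ext
    split at h3 <;> split at h3 <;> omega

noncomputable def mkPerm (hL : a + L ≤ n) (A : Finset (Fin n)) (hA : A.card = L)
    (π : Equiv.Perm (Fin L)) (τ : Equiv.Perm (Fin (n - L))) : Equiv.Perm (Fin n) :=
  Equiv.ofBijective _ (Finite.injective_iff_bijective.mp (mkFun_inj hL A hA π τ))

theorem mkPerm_apply (hL : a + L ≤ n) (A : Finset (Fin n)) (hA : A.card = L)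
    (π : Equiv.Perm (Fin L)) (τ : Equiv.Perm (Fin (n - L))) (x : Fin n) :
    mkPerm hL A hA π τ x = mkFun hL A hA π τ x := rfl

noncomputable def splitMap (hL : a + L ≤ n) :
    ({A : Finset (Fin n) // A.card = L} × Equiv.Perm (Fin L) × Equiv.Perm (Fin (n - L))) →
      Equiv.Perm (Fin n) :=
  fun t => mkPerm hL t.1.1 t.1.2 t.2.1 t.2.2

theorem splitMap_image (hL : a + L ≤ n) (A : Finset (Fin n)) (hA : A.card = L)
    (π : Equiv.Perm (Fin L)) (τ : Equiv.Perm (Fin (n - L))) :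
    A = Finset.image (fun j : Fin L => mkPerm hL A hA π τ ⟨a + (j : ℕ), by omega⟩)
      Finset.univ := by
  ext z
  simp only [Finset.mem_image, Finset.mem_univ, true_and]
  constructor
  · intro hz
    refine ⟨π.symm ((A.orderIsoOfFin hA).symm ⟨z, hz⟩), ?_⟩
    rw [mkPerm_apply, mkFun_window hL A hA π τ _ (by simp)]
    have : (⟨a + (π.symm ((A.orderIsoOfFin hA).symm ⟨z, hz⟩) : ℕ) - a, by omega⟩ : Fin L) =
        π.symm ((A.orderIsoOfFin hA).symm ⟨z, hz⟩) := by
      apply Fin.ext; simp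
    rw [this]
    simp
  · rintro ⟨j, rfl⟩
    rw [mkPerm_apply, mkFun_window hL A hA π τ _ (by simp)]
    exact (A.orderIsoOfFin hA _).2

theorem splitMap_bij (hL : a + L ≤ n) : Function.Bijective (splitMap (n := n) (a := a) hL) := by
  rw [Fintype.bijective_iff_injective_and_card]
  constructor
  · rintro ⟨⟨A, hA⟩, π, τ⟩ ⟨⟨A', hA'⟩, π', τ'⟩ heq
    simp only [splitMap] at heq
    have hAA : A = A' := by
      rw [splitMap_image hL A hA π τ, splitMap_image hL A' hA' π' τ', heq]
    subst hAA
    have hππ : π = π' := by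
      apply Equiv.ext
      intro j
      have h1 : mkPerm hL A hA π τ ⟨a + (j : ℕ), by omega⟩ =
          mkPerm hL A hA' π' τ' ⟨a + (j : ℕ), by omega⟩ := by rw [heq]
      rw [mkPerm_apply, mkPerm_apply, mkFun_window hL A hA π τ _ (by simp),
        mkFun_window hL A hA' π' τ' _ (by simp)] at h1
      have h2 := (A.orderIsoOfFin hA).injective (Subtype.coe_injective h1)
      have h3 : (⟨a + (j : ℕ) - a, by omega⟩ : Fin L) = j := by apply Fin.ext; simp
      rwa [h3] at h2
    subst hππ
    have hττ : τ = τ' := by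
      apply Equiv.ext
      intro j
      by_cases hj : (j : ℕ) < a
      · have h1 : mkPerm hL A hA π τ ⟨(j : ℕ), by omega⟩ =
            mkPerm hL A hA' π τ' ⟨(j : ℕ), by omega⟩ := by rw [heq]
        rw [mkPerm_apply, mkPerm_apply, mkFun_out hL A hA π τ _ (by simp; omega),
          mkFun_out hL A hA' π τ' _ (by simp; omega)] at h1
        have h2 := (Aᶜ.orderIsoOfFin (card_compl_eq A hA)).injective (Subtype.coe_injective h1)
        have h3 : (⟨collapse a L ((⟨(j : ℕ), by omega⟩ : Fin n) : ℕ), by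
            exact collapse_lt hL (by omega) (by simp; omega)⟩ : Fin (n - L)) = j := by
          apply Fin.ext; simp [collapse, hj]
        rwa [h3] at h2
      · have hjL : (j : ℕ) + L < n := by have := j.isLt; omega
        have h1 : mkPerm hL A hA π τ ⟨(j : ℕ) + L, hjL⟩ =
            mkPerm hL A hA' π τ' ⟨(j : ℕ) + L, hjL⟩ := by rw [heq]
        rw [mkPerm_apply, mkPerm_apply, mkFun_out hL A hA π τ _ (by simp; omega),
          mkFun_out hL A hA' π τ' _ (by simp; omega)] at h1
        have h2 := (Aᶜ.orderIsoOfFin (card_compl_eq A hA)).injective (Subtype.coe_injective h1)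
        have h3 : (⟨collapse a L ((⟨(j : ℕ) + L, hjL⟩ : Fin n) : ℕ), by
            exact collapse_lt hL hjL (by simp; omega)⟩ : Fin (n - L)) = j := by
          apply Fin.ext; simp [collapse]; omega
        rwa [h3] at h2
    rw [hττ]
  · have hLn : L ≤ n := by omega
    rw [Fintype.card_prod, Fintype.card_prod, Fintype.card_finset_len, Fintype.card_perm,
      Fintype.card_perm, Fintype.card_fin, Fintype.card_fin, Fintype.card_fin, Fintype.card_perm,
      Fintype.card_fin]
    rw [← Nat.choose_mul_factorial_mul_factorial hLn, Nat.mul_assoc]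

end SplitBij

----------------------------------------------------------------
-- the splitting count
----------------------------------------------------------------

def prodSubtype3 {α β γ : Type*} (q : β → Prop) (r : γ → Prop) :
    {t : α × β × γ // q t.2.1 ∧ r t.2.2} ≃ α × {b // q b} × {c // r c} where
  toFun t := (t.1.1, ⟨t.1.2.1, t.2.1⟩, ⟨t.1.2.2, t.2.2⟩)
  invFun t := ⟨(t.1, t.2.1.1, t.2.2.1), t.2.1.2, t.2.2.2⟩
  left_inv t := rfl
  right_inv t := rfl

theorem Mc_split (d : ℕ) (u : ℕ → ℕ) {n a L : ℕ} (hL : a + L ≤ n) (S₁ S₂ : Finset ℕ)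
    (h1 : ∀ i ∈ S₁, a ≤ i ∧ i + d ≤ a + L)
    (h2 : ∀ i ∈ S₂, a + L ≤ i ∧ i + d ≤ n) :
    Mc d u n (S₁ ∪ S₂) =
      (Finset.univ.filter (fun A : Finset (Fin n) => A.card = L)).card *
        (Mc d u L (S₁.image (· - a)) * Mc d u (n - L) (S₂.image (· - L))) := by
  classical
  have key : ∀ (A : Finset (Fin n)) (hA : A.card = L) (π : Equiv.Perm (Fin L))
      (τ : Equiv.Perm (Fin (n - L))),
      ((∀ i ∈ S₁ ∪ S₂, consecOcc d u (permWord (mkPerm hL A hA π τ)) i) ↔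
        ((∀ j ∈ S₁.image (· - a), consecOcc d u (permWord π) j) ∧
         (∀ j ∈ S₂.image (· - L), consecOcc d u (permWord τ) j))) := by
    intro A hA π τ
    have hfW : ∀ x y : Fin L, ((A.orderIsoOfFin hA x : Fin n) < (A.orderIsoOfFin hA y : Fin n)) ↔
        x < y := by
      intro x y
      rw [Subtype.coe_lt_coe, OrderIso.lt_iff_lt]
    have hfC : ∀ x y : Fin (n - L),
        ((Aᶜ.orderIsoOfFin (card_compl_eq A hA) x : Fin n) <
          (Aᶜ.orderIsoOfFin (card_compl_eq A hA) y : Fin n)) ↔ x < y := by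
      intro x y
      rw [Subtype.coe_lt_coe, OrderIso.lt_iff_lt]
    have keyW : ∀ i ∈ S₁, (consecOcc d u (permWord (mkPerm hL A hA π τ)) i ↔
        consecOcc d u (permWord π) (i - a)) := by
      intro i hi
      obtain ⟨hia, hiL⟩ := h1 i hi
      apply occ_transfer d u _ π (by omega) (by omega) _ hfW
      intro p hp hp1 hp2
      rw [mkPerm_apply, mkFun_window hL A hA π τ _ (by simp only [Fin.val_mk]; omega)]
      have hix : (⟨((⟨i + p, hp1⟩ : Fin n) : ℕ) - a, by simp only [Fin.val_mk]; omega⟩ : Fin L) =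
          ⟨i - a + p, hp2⟩ := by apply Fin.ext; simp only [Fin.val_mk]; omega
      rw [hix]
    have keyC : ∀ i ∈ S₂, (consecOcc d u (permWord (mkPerm hL A hA π τ)) i ↔
        consecOcc d u (permWord τ) (i - L)) := by
      intro i hi
      obtain ⟨hia, hiN⟩ := h2 i hi
      apply occ_transfer d u _ τ (by omega) (by omega) _ hfC
      intro p hp hp1 hp2
      rw [mkPerm_apply, mkFun_out hL A hA π τ _ (by simp only [Fin.val_mk]; omega)]
      have hix : (⟨collapse a L ((⟨i + p, hp1⟩ : Fin n) : ℕ), by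
          exact collapse_lt hL hp1 (by simp only [Fin.val_mk]; omega)⟩ : Fin (n - L)) =
          ⟨i - L + p, hp2⟩ := by
        apply Fin.ext; simp only [Fin.val_mk, collapse]; split <;> omega
      rw [hix]
    constructor
    · intro H
      constructor
      · intro j hj
        obtain ⟨i, hi, rfl⟩ := Finset.mem_image.mp hj
        exact (keyW i hi).mp (H i (Finset.mem_union_left _ hi))
      · intro j hj
        obtain ⟨i, hi, rfl⟩ := Finset.mem_image.mp hj
        exact (keyC i hi).mp (H i (Finset.mem_union_right _ hi))
    · rintro ⟨HQ, HR⟩ i hi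
      rcases Finset.mem_union.mp hi with h | h
      · exact (keyW i h).mpr (HQ _ (Finset.mem_image_of_mem _ h))
      · exact (keyC i h).mpr (HR _ (Finset.mem_image_of_mem _ h))
  have c1 : Fintype.card {σ : Equiv.Perm (Fin n) //
        ∀ i ∈ S₁ ∪ S₂, consecOcc d u (permWord σ) i} =
      Fintype.card {t : {A : Finset (Fin n) // A.card = L} × Equiv.Perm (Fin L) ×
        Equiv.Perm (Fin (n - L)) //
        (∀ j ∈ S₁.image (· - a), consecOcc d u (permWord t.2.1) j) ∧
        (∀ j ∈ S₂.image (· - L), consecOcc d u (permWord t.2.2) j)} := by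
    apply Fintype.card_congr
    apply Equiv.symm
    apply Equiv.subtypeEquiv (Equiv.ofBijective _ (splitMap_bij hL))
    rintro ⟨⟨A, hA⟩, π, τ⟩
    exact (key A hA π τ).symm
  have c2 := Fintype.card_congr (prodSubtype3
      (fun π : Equiv.Perm (Fin L) => ∀ j ∈ S₁.image (· - a), consecOcc d u (permWord π) j)
      (fun τ : Equiv.Perm (Fin (n - L)) => ∀ j ∈ S₂.image (· - L), consecOcc d u (permWord τ) j)
      (α := {A : Finset (Fin n) // A.card = L}))
  rw [Fintype.card_prod, Fintype.card_prod] at c2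
  rw [Mc, Mc, Mc, ← Fintype.card_subtype, ← Fintype.card_subtype, ← Fintype.card_subtype,
    ← Fintype.card_subtype]
  exact c1.trans c2

----------------------------------------------------------------
-- overlap lemma and compatibility
----------------------------------------------------------------

def compatS (d : ℕ) (S : Finset ℕ) : Prop := ∀ i ∈ S, ∀ j ∈ S, i < j → i + (d - 1) ≤ j

theorem overlap_lemma (d : ℕ) (hd3 : 3 ≤ d) (u : ℕ → ℕ)
    (hv : ∀ i, inOverlap d u i ↔ i = 1) {n : ℕ} (σ : Equiv.Perm (Fin n)) {i j : ℕ}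
    (hij : i < j) (hlt : j < i + (d - 1))
    (ho1 : consecOcc d u (permWord σ) i) (ho2 : consecOcc d u (permWord σ) j) : False := by
  set s := j - i with hs
  have hs1 : 1 ≤ s := by omega
  have hs2 : s ≤ d - 2 := by omega
  have hOv : inOverlap d u (d - s) := by
    refine ⟨by omega, by omega, ?_⟩
    intro p q hp hq
    have hds : d - (d - s) = s := by omega
    rw [hds]
    have h2 := ho2 p q (by omega) (by omega)
    have h1 := ho1 (s + p) (s + q) (by omega) (by omega)
    have e1 : i + (s + p) = j + p := by omega
    have e2 : i + (s + q) = j + q := by omega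
    rw [e1, e2] at h1
    exact h2.1.symm.trans h1.1
  have := (hv (d - s)).mp hOv
  omega

theorem mem_validF (d n i : ℕ) (hd1 : 1 ≤ d) : i ∈ validF d n ↔ i + d ≤ n := by
  unfold validF
  simp only [Finset.mem_filter, Finset.mem_range]
  omega

theorem Mc_eq_zero (d : ℕ) (hd3 : 3 ≤ d) (u : ℕ → ℕ)
    (hv : ∀ i, inOverlap d u i ↔ i = 1) (n : ℕ) (S : Finset ℕ)
    (hnc : ¬ compatS d S) : Mc d u n S = 0 := by
  rw [Mc, Finset.card_eq_zero, Finset.filter_eq_empty_iff]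
  intro σ _ hocc
  unfold compatS at hnc
  push_neg at hnc
  obtain ⟨i, hiS, j, hjS, hij, hlt⟩ := hnc
  exact overlap_lemma d hd3 u hv σ hij (by omega) (hocc i hiS) (hocc j hjS)

----------------------------------------------------------------
-- fiberwise sums
----------------------------------------------------------------

theorem OccF_subset (d : ℕ) (u : ℕ → ℕ) {n : ℕ} (σ : Equiv.Perm (Fin n)) :
    OccF d u σ ⊆ validF d n := by
  intro i hi
  rw [OccF, Finset.mem_filter] at hi
  rw [validF, Finset.mem_filter]
  exact ⟨hi.1, hi.2.1⟩

theorem occ_subset_iff (d : ℕ) (hd1 : 1 ≤ d) (u : ℕ → ℕ) {n : ℕ} (σ : Equiv.Perm (Fin n))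
    (T : Finset ℕ) (hT : T ⊆ validF d n) :
    T ⊆ OccF d u σ ↔ ∀ i ∈ T, consecOcc d u (permWord σ) i := by
  constructor
  · intro h i hi
    have := h hi
    rw [OccF, Finset.mem_filter] at this
    exact this.2.2
  · intro h i hi
    have hval := (mem_validF d n i hd1).mp (hT hi)
    rw [OccF, Finset.mem_filter, Finset.mem_range]
    exact ⟨by omega, hval, h i hi⟩

theorem Mc_eq_sum (d : ℕ) (hd1 : 1 ≤ d) (u : ℕ → ℕ) (n : ℕ) (T : Finset ℕ)
    (hT : T ⊆ validF d n) :
    Mc d u n T = ∑ U ∈ (validF d n).powerset.filter (fun U => T ⊆ U), Nc d u n U := by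
  classical
  rw [Mc, Finset.card_eq_sum_card_fiberwise (f := fun σ => OccF d u σ)
    (t := (validF d n).powerset.filter (fun U => T ⊆ U))]
  · apply Finset.sum_congr rfl
    intro U hU
    rw [Finset.mem_filter, Finset.mem_powerset] at hU
    rw [Nc]
    congr 1
    ext σ
    simp only [Finset.mem_filter, Finset.mem_univ, true_and]
    constructor
    · exact fun h => h.2
    · intro h
      refine ⟨?_, h⟩
      have : T ⊆ OccF d u σ := h ▸ hU.2
      exact (occ_subset_iff d hd1 u σ T hT).mp this
  · intro σ hσ
    rw [Finset.mem_coe, Finset.mem_filter] at hσ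
    rw [Finset.mem_coe, Finset.mem_filter, Finset.mem_powerset]
    exact ⟨OccF_subset d u σ, (occ_subset_iff d hd1 u σ T hT).mpr hσ.2⟩

theorem signed_identity (d : ℕ) (hd1 : 1 ≤ d) (u : ℕ → ℕ) (n : ℕ) :
    (Nc d u n ∅ : ℤ) =
      ∑ T ∈ (validF d n).powerset, (-1 : ℤ) ^ T.card * (Mc d u n T : ℤ) := by
  classical
  have step1 : ∀ T ∈ (validF d n).powerset,
      (-1 : ℤ) ^ T.card * (Mc d u n T : ℤ) =
        ∑ U ∈ (validF d n).powerset,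
          (if T ⊆ U then (-1 : ℤ) ^ T.card * (Nc d u n U : ℤ) else 0) := by
    intro T hT
    rw [Finset.mem_powerset] at hT
    rw [Mc_eq_sum d hd1 u n T hT]
    push_cast
    rw [Finset.mul_sum, ← Finset.sum_filter]
  rw [Finset.sum_congr rfl step1, Finset.sum_comm]
  have step2 : ∀ U ∈ (validF d n).powerset,
      (∑ T ∈ (validF d n).powerset,
        (if T ⊆ U then (-1 : ℤ) ^ T.card * (Nc d u n U : ℤ) else 0)) =
      (if U = ∅ then 1 else 0) * (Nc d u n U : ℤ) := by
    intro U hU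
    rw [Finset.mem_powerset] at hU
    rw [← Finset.sum_filter]
    have hPU : (validF d n).powerset.filter (fun T => T ⊆ U) = U.powerset := by
      ext T
      simp only [Finset.mem_filter, Finset.mem_powerset]
      exact ⟨fun h => h.2, fun h => ⟨h.trans hU, h⟩⟩
    rw [hPU, ← Finset.sum_mul, Finset.sum_powerset_neg_one_pow_card]
  rw [Finset.sum_congr rfl step2]
  rw [Finset.sum_eq_single_of_mem (∅ : Finset ℕ) (Finset.empty_mem_powerset _)
    (fun b _ hb => by simp [hb])]
  simp

----------------------------------------------------------------
-- chain extraction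
----------------------------------------------------------------

def noChainS (d m : ℕ) (S : Finset ℕ) : Prop := ¬ ∃ a, ∀ j < m, a + j * (d - 1) ∈ S

theorem chain_card_le (d : ℕ) (hd3 : 3 ≤ d) (S : Finset ℕ) (a t : ℕ)
    (h : ∀ j < t, a + j * (d - 1) ∈ S) : t ≤ S.card := by
  have hinj : Set.InjOn (fun j => a + j * (d - 1)) (Finset.range t) := by
    intro x _ y _ hxy
    simp only at hxy
    have : x * (d - 1) = y * (d - 1) := by omega
    exact Nat.eq_of_mul_eq_mul_right (by omega) this
  have hsub : (Finset.range t).image (fun j => a + j * (d - 1)) ⊆ S := by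
    intro x hx
    obtain ⟨j, hj, rfl⟩ := Finset.mem_image.mp hx
    exact h j (Finset.mem_range.mp hj)
  calc t = ((Finset.range t).image (fun j => a + j * (d - 1))).card := by
        rw [Finset.card_image_of_injOn hinj, Finset.card_range]
    _ ≤ S.card := Finset.card_le_card hsub

theorem extract (d : ℕ) (hd3 : 3 ≤ d) (S : Finset ℕ) (hne : S.Nonempty)
    (hcomp : compatS d S) :
    ∃ a m, 1 ≤ m ∧ (∀ j < m, a + j * (d - 1) ∈ S) ∧ (∀ i ∈ S, a ≤ i) ∧
      (∀ i ∈ S, i ∉ (Finset.range m).image (fun j => a + j * (d - 1)) →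
        a + (m * (d - 1) + 1) ≤ i) := by
  classical
  set a := S.min' hne with ha
  set P : ℕ → Prop := fun t => ∀ j < t, a + j * (d - 1) ∈ S with hP
  have hP1 : P 1 := by
    intro j hj
    interval_cases j
    simpa using S.min'_mem hne
  have hcard : 1 ≤ S.card := Finset.card_pos.mpr hne
  obtain ⟨m, hm1, hPm, hnot⟩ : ∃ m, 1 ≤ m ∧ P m ∧ ¬ P (m + 1) := by
    refine ⟨Nat.findGreatest P S.card, Nat.le_findGreatest hcard hP1,
      Nat.findGreatest_spec hcard hP1, ?_⟩
    by_cases hmc : Nat.findGreatest P S.card + 1 ≤ S.card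
    · exact Nat.findGreatest_is_greatest (by omega) hmc
    · intro hcon
      exact hmc (chain_card_le d hd3 S a (Nat.findGreatest P S.card + 1) hcon)
  have hmiss : a + m * (d - 1) ∉ S := by
    intro hcon
    apply hnot
    intro j hj
    rcases Nat.lt_or_ge j m with h | h
    · exact hPm j h
    · have : j = m := by omega
      subst this; exact hcon
  refine ⟨a, m, hm1, hPm, fun i hi => S.min'_le i hi, ?_⟩
  intro b hb hbnot
  have hab : a ≤ b := S.min'_le b hb
  rcases Nat.lt_trichotomy b (a + m * (d - 1)) with hlt | heq | hgt
  · exfalso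
    have hd1 : 0 < d - 1 := by omega
    obtain ⟨q, r, hr, hqr⟩ : ∃ q r, r < d - 1 ∧ b - a = q * (d - 1) + r :=
      ⟨(b - a) / (d - 1), (b - a) % (d - 1), Nat.mod_lt _ hd1, by
        rw [Nat.mul_comm]; exact ((Nat.div_add_mod (b - a) (d - 1))).symm⟩
    have hqm : q < m := by
      by_contra hcon
      push_neg at hcon
      have h2 : m * (d - 1) ≤ q * (d - 1) := Nat.mul_le_mul_right _ hcon
      omega
    have hcS : a + q * (d - 1) ∈ S := hPm q hqm
    have hcb : a + q * (d - 1) ≤ b := by omega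
    rcases Nat.eq_or_lt_of_le hcb with hceq | hclt
    · exact hbnot (Finset.mem_image.mpr ⟨q, Finset.mem_range.mpr hqm, hceq⟩)
    · have := hcomp _ hcS _ hb hclt
      omega
  · exact absurd (heq ▸ hb) hmiss
  · have hm1' : a + (m - 1) * (d - 1) ∈ S := hPm (m - 1) (by omega)
    have hmul : m * (d - 1) = (m - 1) * (d - 1) + (d - 1) := by
      obtain ⟨t, rfl⟩ : ∃ t, m = t + 1 := ⟨m - 1, by omega⟩
      simp [Nat.succ_mul]
    have hlt2 : a + (m - 1) * (d - 1) < b := by omega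
    have := hcomp _ hm1' _ hb hlt2
    have hne2 : b ≠ a + m * (d - 1) := fun hcon => hmiss (hcon ▸ hb)
    omega

theorem mem_image_sub (S : Finset ℕ) (L : ℕ) (hS : ∀ b ∈ S, L ≤ b) (x : ℕ) :
    x ∈ S.image (· - L) ↔ x + L ∈ S := by
  simp only [Finset.mem_image]
  constructor
  · rintro ⟨b, hb, rfl⟩
    have := hS b hb
    have : b - L + L = b := by omega
    rwa [this]
  · intro h
    exact ⟨x + L, h, by omega⟩

theorem Mc_empty (d : ℕ) (u : ℕ → ℕ) (n : ℕ) :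
    Mc d u n ∅ = (Finset.univ : Finset (Equiv.Perm (Fin n))).card := by
  rw [Mc, Finset.filter_true_of_mem]
  intro σ _
  simp

theorem MeqAux (d : ℕ) (hd3 : 3 ≤ d) (uv uw : ℕ → ℕ) (m : ℕ)
    (hc : ∀ m' < m, cl d uv m' = cl d uw m') :
    ∀ k n (S : Finset ℕ), S.card ≤ k → compatS d S → noChainS d m S → S ⊆ validF d n →
      Mc d uv n S = Mc d uw n S := by
  intro k
  induction k with
  | zero =>
    intro n S hSk _ _ _
    have : S = ∅ := Finset.card_eq_zero.mp (by omega)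
    subst this
    rw [Mc_empty, Mc_empty]
  | succ k IH =>
    intro n S hSk hcomp hnc hsub
    rcases S.eq_empty_or_nonempty with rfl | hne
    · rw [Mc_empty, Mc_empty]
    obtain ⟨a, m₀, hm₀1, hchain, hmin, hfar⟩ := extract d hd3 S hne hcomp
    set L := m₀ * (d - 1) + 1 with hLdef
    set S₁ := (Finset.range m₀).image (fun j => a + j * (d - 1)) with hS₁
    set S₂ := S \ S₁ with hS₂
    have hm₀m : m₀ < m := by
      by_contra hcon
      push_neg at hcon
      exact hnc ⟨a, fun j hj => hchain j (by omega)⟩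
    have hS₁S : S₁ ⊆ S := by
      intro x hx
      obtain ⟨j, hj, rfl⟩ := Finset.mem_image.mp hx
      exact hchain j (Finset.mem_range.mp hj)
    have hUnion : S₁ ∪ S₂ = S := Finset.union_sdiff_of_subset hS₁S
    have hmul : m₀ * (d - 1) = (m₀ - 1) * (d - 1) + (d - 1) := by
      obtain ⟨t, rfl⟩ : ∃ t, m₀ = t + 1 := ⟨m₀ - 1, by omega⟩
      simp [Nat.succ_mul]
    have h1 : ∀ i ∈ S₁, a ≤ i ∧ i + d ≤ a + L := by
      intro i hi
      obtain ⟨j, hj, rfl⟩ := Finset.mem_image.mp hi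
      rw [Finset.mem_range] at hj
      have hj2 : j * (d - 1) ≤ (m₀ - 1) * (d - 1) := Nat.mul_le_mul_right _ (by omega)
      exact ⟨by omega, by omega⟩
    have hS2lo : ∀ i ∈ S₂, a + L ≤ i := by
      intro i hi
      rw [hS₂, Finset.mem_sdiff] at hi
      exact hfar i hi.1 hi.2
    have h2 : ∀ i ∈ S₂, a + L ≤ i ∧ i + d ≤ n := by
      intro i hi
      refine ⟨hS2lo i hi, ?_⟩
      have := (mem_validF d n i (by omega)).mp (hsub (Finset.mem_sdiff.mp hi).1)
      omega
    have hLn : a + L ≤ n := by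
      have hlast : a + (m₀ - 1) * (d - 1) ∈ S := hchain (m₀ - 1) (by omega)
      have := (mem_validF d n _ (by omega)).mp (hsub hlast)
      omega
    have himg : S₁.image (· - a) = chainF d m₀ := by
      rw [hS₁, Finset.image_image, chainF]
      apply Finset.image_congr
      intro j _
      simp only [Function.comp_apply]
      omega
    rw [← hUnion, Mc_split d uv hLn S₁ S₂ h1 h2, Mc_split d uw hLn S₁ S₂ h1 h2, himg]
    have hcl : Mc d uv L (chainF d m₀) = Mc d uw L (chainF d m₀) := hc m₀ hm₀m
    have haS₁ : a ∈ S₁ := Finset.mem_image.mpr ⟨0, Finset.mem_range.mpr (by omega), by simp⟩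
    have hS₂card : S₂.card < S.card := by
      apply Finset.card_lt_card
      rw [hS₂]
      constructor
      · exact Finset.sdiff_subset
      · intro hcon
        have := hcon (hne.choose_spec)
        have haa : a ∈ S := hS₁S haS₁
        have := Finset.mem_sdiff.mp (hcon haa)
        exact this.2 haS₁
    have hLS₂ : ∀ b ∈ S₂, L ≤ b := fun b hb => by have := hS2lo b hb; omega
    have hrest : Mc d uv (n - L) (S₂.image (· - L)) = Mc d uw (n - L) (S₂.image (· - L)) := by
      apply IH (n - L)
      · calc (S₂.image (· - L)).card ≤ S₂.card := Finset.card_image_le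
          _ ≤ k := by omega
      · intro x hx y hy hxy
        have hx2 := (mem_image_sub S₂ L hLS₂ x).mp hx
        have hy2 := (mem_image_sub S₂ L hLS₂ y).mp hy
        have := hcomp _ (Finset.mem_sdiff.mp hx2).1 _ (Finset.mem_sdiff.mp hy2).1 (by omega)
        omega
      · rintro ⟨a', ha'⟩
        apply hnc
        refine ⟨a' + L, fun j hj => ?_⟩
        have := (mem_image_sub S₂ L hLS₂ _).mp (ha' j hj)
        have heq : a' + j * (d - 1) + L = a' + L + j * (d - 1) := by omega
        rw [heq] at this
        exact (Finset.mem_sdiff.mp this).1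
      · intro x hx
        have hx2 := (mem_image_sub S₂ L hLS₂ x).mp hx
        have hxv := (mem_validF d n _ (by omega)).mp (hsub (Finset.mem_sdiff.mp hx2).1)
        have hxlo := hS2lo _ hx2
        rw [mem_validF d (n - L) x (by omega)]
        omega
    rw [hcl, hrest]

----------------------------------------------------------------
-- gPerm and Nc
----------------------------------------------------------------

theorem conCount_eq_occ (d : ℕ) (u : ℕ → ℕ) {n : ℕ} (σ : Equiv.Perm (Fin n)) :
    conCount d n u (permWord σ) = (OccF d u σ).card := rfl

theorem gPerm_eq_sum (d : ℕ) (hd1 : 1 ≤ d) (u : ℕ → ℕ) (n r : ℕ) :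
    gPerm d u n r = ∑ U ∈ (validF d n).powerset.filter (fun U => U.card = r), Nc d u n U := by
  classical
  rw [gPerm, Nat.card_eq_fintype_card, Fintype.card_subtype]
  rw [Finset.card_eq_sum_card_fiberwise (f := fun σ : Equiv.Perm (Fin n) => OccF d u σ)
    (t := (validF d n).powerset.filter (fun U => U.card = r))
    (fun σ hσ => by
      rw [Finset.mem_coe, Finset.mem_filter] at hσ
      rw [Finset.mem_coe, Finset.mem_filter, Finset.mem_powerset]
      exact ⟨OccF_subset d u σ, by rw [← conCount_eq_occ d u σ]; exact hσ.2⟩)]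
  apply Finset.sum_congr rfl
  intro U hU
  rw [Nc]
  congr 1
  ext σ
  simp only [Finset.mem_filter, Finset.mem_univ, true_and]
  constructor
  · exact fun h => h.2
  · intro h
    refine ⟨?_, h⟩
    rw [conCount_eq_occ d u σ, h]
    exact ((Finset.mem_filter.mp hU).2)

theorem gPerm_zero (d : ℕ) (hd1 : 1 ≤ d) (u : ℕ → ℕ) (n : ℕ) :
    gPerm d u n 0 = Nc d u n ∅ := by
  rw [gPerm_eq_sum d hd1 u n 0]
  have : (validF d n).powerset.filter (fun U => U.card = 0) = {∅} := by
    ext U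
    simp only [Finset.mem_filter, Finset.mem_powerset, Finset.card_eq_zero,
      Finset.mem_singleton]
    exact ⟨fun h => h.2, fun h => ⟨h ▸ Finset.empty_subset _, h⟩⟩
  rw [this, Finset.sum_singleton]

----------------------------------------------------------------
-- cluster equality
----------------------------------------------------------------

theorem chain_gap (d : ℕ) (hd3 : 3 ≤ d) (T : Finset ℕ) (hcomp : compatS d T) (m a : ℕ)
    (hch : ∀ j < m, a + j * (d - 1) ∈ T) (b : ℕ) (hb : b ∈ T) (hab : a ≤ b)
    (hlt : b < a + m * (d - 1)) : ∃ j < m, b = a + j * (d - 1) := by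
  by_contra hbnot
  push_neg at hbnot
  have hd1 : 0 < d - 1 := by omega
  obtain ⟨q, r, hr, hqr⟩ : ∃ q r, r < d - 1 ∧ b - a = q * (d - 1) + r :=
    ⟨(b - a) / (d - 1), (b - a) % (d - 1), Nat.mod_lt _ hd1, by
      rw [Nat.mul_comm]; exact ((Nat.div_add_mod (b - a) (d - 1))).symm⟩
  have hqm : q < m := by
    by_contra hcon
    push_neg at hcon
    have h2 : m * (d - 1) ≤ q * (d - 1) := Nat.mul_le_mul_right _ hcon
    omega
  have hcS : a + q * (d - 1) ∈ T := hch q hqm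
  have hcb : a + q * (d - 1) ≤ b := by omega
  rcases Nat.eq_or_lt_of_le hcb with hceq | hclt
  · exact hbnot q hqm hceq.symm
  · have := hcomp _ hcS _ hb hclt
    omega

theorem chainF_subset_valid (d : ℕ) (hd3 : 3 ≤ d) (m : ℕ) (hm : 1 ≤ m) :
    chainF d m ⊆ validF d (m * (d - 1) + 1) := by
  intro x hx
  obtain ⟨j, hj, rfl⟩ := Finset.mem_image.mp hx
  rw [Finset.mem_range] at hj
  rw [mem_validF d _ _ (by omega)]
  have h2 : j * (d - 1) ≤ (m - 1) * (d - 1) := Nat.mul_le_mul_right _ (by omega)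
  have hmul : m * (d - 1) = (m - 1) * (d - 1) + (d - 1) := by
    obtain ⟨t, rfl⟩ : ∃ t, m = t + 1 := ⟨m - 1, by omega⟩
    simp [Nat.succ_mul]
  omega

theorem chain_only (d : ℕ) (hd3 : 3 ≤ d) (m : ℕ) (hm : 1 ≤ m) (T : Finset ℕ)
    (hT : T ⊆ validF d (m * (d - 1) + 1)) (hcomp : compatS d T)
    (hch : ∃ a, ∀ j < m, a + j * (d - 1) ∈ T) : T = chainF d m := by
  obtain ⟨a, hch⟩ := hch
  have hmul : m * (d - 1) = (m - 1) * (d - 1) + (d - 1) := by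
    obtain ⟨t, rfl⟩ : ∃ t, m = t + 1 := ⟨m - 1, by omega⟩
    simp [Nat.succ_mul]
  have ha0 : a = 0 := by
    have hlast : a + (m - 1) * (d - 1) ∈ T := hch (m - 1) (by omega)
    have := (mem_validF d _ _ (by omega)).mp (hT hlast)
    omega
  subst ha0
  apply Finset.Subset.antisymm
  · intro b hb
    have hbv := (mem_validF d _ _ (by omega)).mp (hT hb)
    have hblt : b < 0 + m * (d - 1) := by omega
    obtain ⟨j, hj, rfl⟩ := chain_gap d hd3 T hcomp m 0 hch b hb (by omega) hblt
    exact Finset.mem_image.mpr ⟨j, Finset.mem_range.mpr hj, by omega⟩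
  · intro x hx
    obtain ⟨j, hj, rfl⟩ := Finset.mem_image.mp hx
    rw [Finset.mem_range] at hj
    have := hch j hj
    simpa using this

theorem ceq (d : ℕ) (hd3 : 3 ≤ d) (uv uw : ℕ → ℕ)
    (hv : ∀ i, inOverlap d uv i ↔ i = 1) (hw : ∀ i, inOverlap d uw i ↔ i = 1)
    (h0 : ∀ n : ℕ, Nc d uv n ∅ = Nc d uw n ∅) : ∀ m, cl d uv m = cl d uw m := by
  intro m
  induction m using Nat.strong_induction_on with
  | _ m IH =>
    rcases Nat.eq_zero_or_pos m with rfl | hm1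
    · have hch : chainF d 0 = ∅ := by simp [chainF]
      rw [cl, cl, hch, Mc_empty, Mc_empty]
    have hMT : ∀ T ∈ (validF d (m * (d - 1) + 1)).powerset, T ≠ chainF d m →
        Mc d uv (m * (d - 1) + 1) T = Mc d uw (m * (d - 1) + 1) T := by
      intro T hT hTne
      rw [Finset.mem_powerset] at hT
      by_cases hcomp : compatS d T
      · have hnc : noChainS d m T := by
          intro hcon
          exact hTne (chain_only d hd3 m hm1 T hT hcomp hcon)
        exact MeqAux d hd3 uv uw m (fun m' hm' => IH m' hm') T.card _ T le_rfl hcomp hnc hT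
      · rw [Mc_eq_zero d hd3 uv hv _ T hcomp, Mc_eq_zero d hd3 uw hw _ T hcomp]
    have hsv := signed_identity d (by omega) uv (m * (d - 1) + 1)
    have hsw := signed_identity d (by omega) uw (m * (d - 1) + 1)
    have hchainmem : chainF d m ∈ (validF d (m * (d - 1) + 1)).powerset :=
      Finset.mem_powerset.mpr (chainF_subset_valid d hd3 m hm1)
    rw [Finset.sum_eq_add_sum_sdiff_singleton_of_mem hchainmem] at hsv hsw
    have hrest : ∑ T ∈ (validF d (m * (d - 1) + 1)).powerset \ {chainF d m},
        (-1 : ℤ) ^ T.card * (Mc d uv (m * (d - 1) + 1) T : ℤ) =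
        ∑ T ∈ (validF d (m * (d - 1) + 1)).powerset \ {chainF d m},
        (-1 : ℤ) ^ T.card * (Mc d uw (m * (d - 1) + 1) T : ℤ) := by
      apply Finset.sum_congr rfl
      intro T hT
      rw [Finset.mem_sdiff, Finset.mem_singleton] at hT
      rw [hMT T hT.1 hT.2]
    have h0' : (Nc d uv (m * (d - 1) + 1) ∅ : ℤ) = (Nc d uw (m * (d - 1) + 1) ∅ : ℤ) := by
      exact_mod_cast h0 (m * (d - 1) + 1)
    have hkey : (-1 : ℤ) ^ (chainF d m).card * (Mc d uv (m * (d - 1) + 1) (chainF d m) : ℤ) =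
        (-1 : ℤ) ^ (chainF d m).card * (Mc d uw (m * (d - 1) + 1) (chainF d m) : ℤ) := by
      linarith [hsv, hsw, hrest, h0']
    have hMc := mul_left_cancel₀ (a := (-1 : ℤ) ^ (chainF d m).card)
      (pow_ne_zero _ (by norm_num : (-1 : ℤ) ≠ 0)) hkey
    rw [cl, cl]
    exact_mod_cast hMc

----------------------------------------------------------------
-- downward induction and conclusion
----------------------------------------------------------------

theorem Neq (d : ℕ) (hd1 : 1 ≤ d) (uv uw : ℕ → ℕ) (n : ℕ)
    (hM : ∀ T ⊆ validF d n, Mc d uv n T = Mc d uw n T) :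
    ∀ k (U : Finset ℕ), U ⊆ validF d n → (validF d n).card - U.card ≤ k →
      Nc d uv n U = Nc d uw n U := by
  intro k
  induction k with
  | zero =>
    intro U hU hcard
    have hUc : (validF d n).card ≤ U.card := by omega
    have hUeq : U = validF d n := Finset.eq_of_subset_of_card_le hU hUc
    subst hUeq
    have hsingle : (validF d n).powerset.filter (fun V => validF d n ⊆ V) = {validF d n} := by
      ext V
      simp only [Finset.mem_filter, Finset.mem_powerset, Finset.mem_singleton]
      exact ⟨fun h => Finset.Subset.antisymm h.1 h.2, fun h => ⟨h ▸ le_rfl, h ▸ le_rfl⟩⟩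
    have h1 := Mc_eq_sum d hd1 uv n (validF d n) le_rfl
    have h2 := Mc_eq_sum d hd1 uw n (validF d n) le_rfl
    rw [hsingle, Finset.sum_singleton] at h1 h2
    rw [← h1, ← h2]
    exact hM _ le_rfl
  | succ k IH =>
    intro U hU hcard
    have hsplit : (validF d n).powerset.filter (fun V => U ⊆ V) =
        insert U ((validF d n).powerset.filter (fun V => U ⊆ V ∧ U ≠ V)) := by
      ext V
      simp only [Finset.mem_filter, Finset.mem_powerset, Finset.mem_insert]
      constructor
      · intro h
        by_cases hUV : U = V
        · exact Or.inl hUV.symm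
        · exact Or.inr ⟨h.1, h.2, hUV⟩
      · rintro (rfl | h)
        · exact ⟨hU, le_rfl⟩
        · exact ⟨h.1, h.2.1⟩
    have hnotmem : U ∉ (validF d n).powerset.filter (fun V => U ⊆ V ∧ U ≠ V) := by
      simp only [Finset.mem_filter]
      tauto
    have h1 := Mc_eq_sum d hd1 uv n U hU
    have h2 := Mc_eq_sum d hd1 uw n U hU
    rw [hsplit, Finset.sum_insert hnotmem] at h1 h2
    have hrest : ∑ V ∈ (validF d n).powerset.filter (fun V => U ⊆ V ∧ U ≠ V), Nc d uv n V =
        ∑ V ∈ (validF d n).powerset.filter (fun V => U ⊆ V ∧ U ≠ V), Nc d uw n V := by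
      apply Finset.sum_congr rfl
      intro V hV
      rw [Finset.mem_filter, Finset.mem_powerset] at hV
      have hss : U ⊂ V := Finset.ssubset_iff_subset_ne.mpr ⟨hV.2.1, hV.2.2⟩
      have hcV : U.card < V.card := Finset.card_lt_card hss
      have hcV2 : V.card ≤ (validF d n).card := Finset.card_le_card hV.1
      exact IH V hV.1 (by omega)
    have hMU := hM U hU
    omega

theorem final_Neq (d : ℕ) (hd3 : 3 ≤ d) (uv uw : ℕ → ℕ)
    (hv : ∀ i, inOverlap d uv i ↔ i = 1) (hw : ∀ i, inOverlap d uw i ↔ i = 1)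
    (hcl : ∀ m, cl d uv m = cl d uw m) (n : ℕ) :
    ∀ U ⊆ validF d n, Nc d uv n U = Nc d uw n U := by
  have hM : ∀ T ⊆ validF d n, Mc d uv n T = Mc d uw n T := by
    intro T hT
    by_cases hcomp : compatS d T
    · have hnc : noChainS d (T.card + 1) T := by
        rintro ⟨a, ha⟩
        have := chain_card_le d hd3 T a (T.card + 1) ha
        omega
      exact MeqAux d hd3 uv uw (T.card + 1) (fun m' _ => hcl m') T.card n T le_rfl hcomp hnc hT
    · rw [Mc_eq_zero d hd3 uv hv n T hcomp, Mc_eq_zero d hd3 uw hw n T hcomp]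
  intro U hU
  exact Neq d (by omega) uv uw n hM (validF d n).card U hU (by omega)

/-- Non-overlapping patterns that are c-Wilf-equivalent in permutations are strongly
c-Wilf-equivalent in permutations. -/
theorem nonoverlapping_cWilf_implies_strong (d : ℕ) (hd : 3 ≤ d)
    (v w : Equiv.Perm (Fin d))
    (hv : ∀ i, inOverlap d (permWord v) i ↔ i = 1)
    (hw : ∀ i, inOverlap d (permWord w) i ↔ i = 1)
    (h0 : ∀ n : ℕ, gPerm d (permWord v) n 0 = gPerm d (permWord w) n 0) :
    ∀ n r : ℕ, gPerm d (permWord v) n r = gPerm d (permWord w) n r := by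
  have h0' : ∀ n : ℕ, Nc d (permWord v) n ∅ = Nc d (permWord w) n ∅ := by
    intro n
    rw [← gPerm_zero d (by omega) _ n, ← gPerm_zero d (by omega) _ n]
    exact h0 n
  have hcl := ceq d hd (permWord v) (permWord w) hv hw h0'
  intro n r
  rw [gPerm_eq_sum d (by omega) _ n r, gPerm_eq_sum d (by omega) _ n r]
  apply Finset.sum_congr rfl
  intro U hU
  rw [Finset.mem_filter, Finset.mem_powerset] at hU
  exact final_Neq d hd _ _ hv hw hcl n U hU.1
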